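/- Let K be a formally real field. The following are equivalent: (1) for every a ∈ K, a² ∈ ∑K⁴; (2) for every valuation subring A of K whose residue field is formally real, the value group of A is 2-divisible, i.e. every element of the quotient group Kˣ/Aˣ is a square; (3) K admits no order of exact level 2. -/

import Mathlib

/-- An ordering of a (comm) ring `K`: `P + P ⊆ P`, `P·P ⊆ P`, `-1 ∉ P`, `P ∪ (-P) = K`. -/
def IsOrdering {K : Type*} [CommRing K] (P : Set K) : Prop :=
  (∀ x ∈ P, ∀ y ∈ P, x + y ∈ P) ∧ (∀ x ∈ P, ∀ y ∈ P, x * y ∈ P) ∧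
    (-1 : K) ∉ P ∧ ∀ x : K, x ∈ P ∨ -x ∈ P

/-- `sumsOfPowers K n` is the set of finite sums of `n`-th powers of elements of `K`. -/
def sumsOfPowers (K : Type*) [CommRing K] (n : ℕ) : Set K :=
  {a | ∃ (m : ℕ) (f : Fin m → K), a = ∑ i, f i ^ n}

/-- An order of exact level `n` on a field `K`: a subset `P` with `0, 1 ∈ P`, `-1 ∉ P`,
`P + P ⊆ P`, `P·P ⊆ P`, such that `P* = P \ {0}` is a subgroup of `Kˣ` with
`Kˣ/P* ≅ ℤ/2nℤ`. -/
def IsOrderOfExactLevel {K : Type*} [Field K] (P : Set K) (n : ℕ) : Prop :=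
  (0 : K) ∈ P ∧ (1 : K) ∈ P ∧ (-1 : K) ∉ P ∧
    (∀ x ∈ P, ∀ y ∈ P, x + y ∈ P) ∧ (∀ x ∈ P, ∀ y ∈ P, x * y ∈ P) ∧
    ∃ H : Subgroup Kˣ, (∀ u : Kˣ, u ∈ H ↔ (u : K) ∈ P) ∧
      Nonempty (Kˣ ⧸ H ≃* Multiplicative (ZMod (2 * n)))


namespace BeckerAux

/-- `sumsOfPowers K n` copy for internal work. -/
def sums (K : Type*) [CommRing K] (n : ℕ) : Set K :=
  {a | ∃ (m : ℕ) (f : Fin m → K), a = ∑ i, f i ^ n}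

variable {K : Type*} [Field K]

theorem sums_zero_mem (n : ℕ) : (0 : K) ∈ sums K n :=
  ⟨0, fun i => 0, by simp⟩

theorem sums_pow_mem (n : ℕ) (x : K) : x ^ n ∈ sums K n :=
  ⟨1, fun _ => x, by simp⟩

theorem sums_add_mem {n : ℕ} {a b : K} (ha : a ∈ sums K n) (hb : b ∈ sums K n) :
    a + b ∈ sums K n := by
  obtain ⟨m1, f, rfl⟩ := ha
  obtain ⟨m2, g, rfl⟩ := hb
  refine ⟨m1 + m2, Fin.addCases f g, ?_⟩
  rw [Fin.sum_univ_add]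
  simp

theorem sums_mul_mem {n : ℕ} {a b : K} (ha : a ∈ sums K n) (hb : b ∈ sums K n) :
    a * b ∈ sums K n := by
  obtain ⟨m1, f, rfl⟩ := ha
  obtain ⟨m2, g, rfl⟩ := hb
  refine ⟨m1 * m2, fun k => f (finProdFinEquiv.symm k).1 * g (finProdFinEquiv.symm k).2, ?_⟩
  rw [Finset.sum_mul_sum]
  have h2 : ∑ k : Fin (m1 * m2),
      (f (finProdFinEquiv.symm k).1 * g (finProdFinEquiv.symm k).2) ^ n
      = ∑ p : Fin m1 × Fin m2, (f p.1 * g p.2) ^ n :=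
    Fintype.sum_equiv finProdFinEquiv.symm _ _ fun k => rfl
  rw [h2, Fintype.sum_prod_type]
  simp [mul_pow]

theorem charZero_of_real (hreal : (-1 : K) ∉ sums K 2) : CharZero K := by
  obtain ⟨p, hp⟩ := CharP.exists K
  rcases CharP.char_is_prime_or_zero K p with hprime | hzero
  · exfalso
    apply hreal
    refine ⟨p - 1, fun _ => 1, ?_⟩
    have hcast : ((p : ℕ) : K) = 0 := CharP.cast_eq_zero K p
    have h1 : (1 : ℕ) ≤ p := hprime.one_lt.le
    have : ∑ _i : Fin (p - 1), (1 : K) ^ 2 = ((p - 1 : ℕ) : K) := by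
      simp
    rw [this, Nat.cast_sub h1, hcast]
    ring
  · subst hzero
    exact CharP.charP_to_charZero K

section ValuationHelpers

variable (A : ValuationSubring K)

theorem mem_unitGroup_of (x : Kˣ) (h1 : (x : K) ∈ A) (h2 : ((x : K))⁻¹ ∈ A) :
    x ∈ A.unitGroup := by
  rw [ValuationSubring.mem_unitGroup_iff]
  have e1 : A.valuation x ≤ 1 := (A.valuation_le_one_iff _).2 h1
  have e2 : A.valuation ((x : K))⁻¹ ≤ 1 := (A.valuation_le_one_iff _).2 h2
  rw [map_inv₀] at e2
  have hx0 : A.valuation x ≠ 0 := by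
    rw [Valuation.ne_zero_iff]
    exact x.ne_zero
  have : A.valuation x * (A.valuation x)⁻¹ ≤ A.valuation x * 1 := mul_le_mul_right e2 _
  rw [mul_inv_cancel₀ hx0, mul_one] at this
  exact le_antisymm e1 this

theorem of_mem_unitGroup {x : Kˣ} (hx : x ∈ A.unitGroup) :
    (x : K) ∈ A ∧ ((x : K))⁻¹ ∈ A := by
  rw [ValuationSubring.mem_unitGroup_iff] at hx
  constructor
  · exact A.mem_of_valuation_le_one _ hx.le
  · apply A.mem_of_valuation_le_one
    rw [map_inv₀, hx, inv_one]

theorem mem_unitGroup_of_sq {w : Kˣ} (h : w * w ∈ A.unitGroup) : w ∈ A.unitGroup := by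
  obtain ⟨h1, h2⟩ := of_mem_unitGroup A h
  have hco : ((w * w : Kˣ) : K) = (w : K) * w := rfl
  rw [hco] at h1
  have hco2 : (((w * w : Kˣ) : K))⁻¹ = (w : K)⁻¹ * (w : K)⁻¹ := by
    rw [hco, mul_inv]
  rw [hco2] at h2
  rcases A.mem_or_inv_mem (w : K) with hw | hw
  · refine mem_unitGroup_of A w hw ?_
    have h3 : (w : K)⁻¹ = (w : K) * ((w:K)⁻¹ * (w:K)⁻¹) := by
      rw [← mul_assoc, mul_inv_cancel₀ w.ne_zero, one_mul]
    rw [h3]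
    exact A.mul_mem _ _ hw h2
  · refine mem_unitGroup_of A w ?_ hw
    have h3 : (w : K) = ((w : K) * w) * (w : K)⁻¹ := by
      rw [mul_assoc, mul_inv_cancel₀ w.ne_zero, mul_one]
    rw [h3]
    exact A.mul_mem _ _ h1 hw

/-- choose an index of minimal valuation among the nonzero values -/
theorem exists_min_div (s : Finset ℕ) (f : ℕ → K) (hs : ∃ i ∈ s, f i ≠ 0) :
    ∃ j ∈ s, f j ≠ 0 ∧ ∀ i ∈ s, f i / f j ∈ A := by
  classical
  induction s using Finset.induction_on with
  | empty => simp at hs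
  | @insert a s ha ih =>
    by_cases hsn : ∃ i ∈ s, f i ≠ 0
    · obtain ⟨j, hj, hfj, hdiv⟩ := ih hsn
      by_cases hfa : f a = 0
      · refine ⟨j, Finset.mem_insert_of_mem hj, hfj, ?_⟩
        intro i hi
        rcases Finset.mem_insert.1 hi with rfl | hi
        · rw [hfa, zero_div]; exact A.zero_mem
        · exact hdiv i hi
      · rcases A.mem_or_inv_mem (f a / f j) with h | h
        · refine ⟨j, Finset.mem_insert_of_mem hj, hfj, ?_⟩
          intro i hi
          rcases Finset.mem_insert.1 hi with rfl | hi
          · exact h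
          · exact hdiv i hi
        · rw [inv_div] at h
          refine ⟨a, Finset.mem_insert_self a s, hfa, ?_⟩
          intro i hi
          rcases Finset.mem_insert.1 hi with rfl | hi
          · rw [div_self hfa]; exact A.one_mem
          · have : f i / f a = (f i / f j) * (f j / f a) := by
              field_simp
            rw [this]
            exact A.mul_mem _ _ (hdiv i hi) h
    · push_neg at hsn
      obtain ⟨i0, hi0, hfi0⟩ := hs
      have hfa : f a ≠ 0 := by
        rcases Finset.mem_insert.1 hi0 with rfl | h
        · exact hfi0
        · exact absurd (hsn i0 h) hfi0
      refine ⟨a, Finset.mem_insert_self a s, hfa, ?_⟩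
      intro i hi
      rcases Finset.mem_insert.1 hi with rfl | hi
      · rw [div_self hfa]; exact A.one_mem
      · rw [hsn i hi, zero_div]; exact A.zero_mem

end ValuationHelpers

end BeckerAux
namespace BeckerAux

variable {K : Type*} [Field K]

theorem sums_finset_mem (n : ℕ) {k : Type*} [Field k] (s : Finset ℕ) (h : ℕ → k) :
    (∑ i ∈ s, h i ^ n) ∈ sums k n := by
  classical
  induction s using Finset.induction_on with
  | empty => simpa using sums_zero_mem n
  | @insert a s ha ih =>
    rw [Finset.sum_insert ha]
    exact sums_add_mem (sums_pow_mem n _) ih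

theorem one_to_two (h1 : ∀ a : K, a ^ 2 ∈ sums K 4) (A : ValuationSubring K)
    (hA : (-1 : IsLocalRing.ResidueField A) ∉ sums (IsLocalRing.ResidueField A) 2)
    (g : Kˣ ⧸ A.unitGroup) : ∃ h : Kˣ ⧸ A.unitGroup, h * h = g := by
  classical
  obtain ⟨x, rfl⟩ := QuotientGroup.mk_surjective g
  obtain ⟨m, f, hf⟩ := h1 (x : K)
  set F : ℕ → K := fun i => if h : i < m then f ⟨i, h⟩ else 0 with hF
  have hfF : (x : K) ^ 2 = ∑ i ∈ Finset.range m, F i ^ 4 := by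
    rw [hf, ← Fin.sum_univ_eq_sum_range (fun i => F i ^ 4) m]
    refine Finset.sum_congr rfl fun i _ => ?_
    simp [hF, i.isLt]
  have hex : ∃ i ∈ Finset.range m, F i ≠ 0 := by
    by_contra hc
    push_neg at hc
    have : (x : K) ^ 2 = 0 := by
      rw [hfF]
      exact Finset.sum_eq_zero fun i hi => by rw [hc i hi]; ring
    exact pow_ne_zero 2 x.ne_zero this
  obtain ⟨j, hjm, hfj, hdiv⟩ := exists_min_div A (Finset.range m) F hex
  -- the elements F i / F j all lie in A
  have hmemt : ∀ i : ℕ, F i / F j ∈ A := by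
    intro i
    by_cases hi : i < m
    · exact hdiv i (Finset.mem_range.2 hi)
    · have : F i = 0 := by simp [hF, hi]
      rw [this, zero_div]; exact A.zero_mem
  set t : ℕ → A := fun i => ⟨F i / F j, hmemt i⟩ with ht
  set Y : A := ∑ i ∈ Finset.range m, t i ^ 4 with hY
  have hYK : (Y : K) = (x : K) ^ 2 / F j ^ 4 := by
    have : (Y : K) = ∑ i ∈ Finset.range m, (F i / F j) ^ 4 := by
      rw [hY]
      push_cast
      rfl
    rw [this, hfF, Finset.sum_div]
    refine Finset.sum_congr rfl fun i _ => ?_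
    rw [div_pow]
  have htj : t j = 1 := by
    ext
    simp only [ht]
    exact div_self hfj
  -- Y is a unit
  have hYunit : IsUnit Y := by
    by_contra hYn
    have hmem : Y ∈ IsLocalRing.maximalIdeal A := by
      rw [IsLocalRing.mem_maximalIdeal]
      exact hYn
    have hr0 : IsLocalRing.residue A Y = 0 := by
      exact (Ideal.Quotient.eq_zero_iff_mem).2 hmem
    apply hA
    set r := IsLocalRing.residue A with hrdef
    have hsum0 : ∑ i ∈ Finset.range m, (r (t i)) ^ 4 = 0 := by
      rw [← hr0, hY]
      rw [map_sum]
      refine Finset.sum_congr rfl fun i _ => ?_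
      rw [map_pow]
    have hrtj : r (t j) = 1 := by rw [htj, map_one]
    have hone : (1 : IsLocalRing.ResidueField A)
        + ∑ i ∈ (Finset.range m).erase j, (r (t i)) ^ 4 = 0 := by
      have h := Finset.add_sum_erase (Finset.range m) (fun i => (r (t i)) ^ 4) hjm
      rw [hsum0, hrtj, one_pow] at h
      exact h
    have hneg : (-1 : IsLocalRing.ResidueField A)
        = ∑ i ∈ (Finset.range m).erase j, ((r (t i)) ^ 2) ^ 2 := by
      have h2 : ∑ i ∈ (Finset.range m).erase j, ((r (t i)) ^ 2) ^ 2
          = ∑ i ∈ (Finset.range m).erase j, (r (t i)) ^ 4 := by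
        refine Finset.sum_congr rfl fun i _ => ?_
        ring
      rw [h2]
      rw [add_comm, add_eq_zero_iff_eq_neg] at hone
      exact hone.symm
    rw [hneg]
    exact sums_finset_mem 2 _ _
  obtain ⟨u, hu⟩ := hYunit
  have hYinv : ((Y : K))⁻¹ ∈ A := by
    have h1' : ((u⁻¹ : Aˣ) : A) * ((u : Aˣ) : A) = 1 := u.inv_mul
    rw [hu] at h1'
    have h2' : (((u⁻¹ : Aˣ) : A) : K) * (Y : K) = 1 := by
      exact_mod_cast congrArg (Subtype.val) h1'
    have h3' : (((u⁻¹ : Aˣ) : A) : K) = ((Y : K))⁻¹ := eq_inv_of_mul_eq_one_left h2'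
    rw [← h3']
    exact ((u⁻¹ : Aˣ) : A).2
  -- quotient group manipulation
  set Fju : Kˣ := Units.mk0 (F j) hfj with hFju
  refine ⟨QuotientGroup.mk Fju, ?_⟩
  rw [← QuotientGroup.mk_mul]
  rw [QuotientGroup.eq]
  set w0 : Kˣ := (Fju * Fju)⁻¹ * x with hw0
  apply mem_unitGroup_of_sq
  have hval : ((w0 * w0 : Kˣ) : K) = (Y : K) := by
    rw [hYK, hw0]
    push_cast [Units.val_mul, hFju, Units.val_mk0]
    field_simp
  refine mem_unitGroup_of A _ ?_ ?_
  · rw [hval]; exact Y.2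
  · rw [hval]; exact hYinv

end BeckerAux
namespace BeckerAux

/-- On `ZMod 4`: being odd. -/
def Odd4 (c : ZMod 4) : Prop := c = 1 ∨ c = 3

instance : DecidablePred Odd4 := fun c => decidable_of_iff (c = 1 ∨ c = 3) Iff.rfl

/-- Data of an order of exact level 2 on a field, in signature form. -/
structure L2 (K : Type*) [Field K] where
  P : Set K
  sig : K → ZMod 4
  sig_zero : sig 0 = 0
  sig_mul : ∀ {x y : K}, x ≠ 0 → y ≠ 0 → sig (x * y) = sig x + sig y
  mem_iff : ∀ {x : K}, x ≠ 0 → (x ∈ P ↔ sig x = 0)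
  zero_mem : (0 : K) ∈ P
  add_mem : ∀ {x y : K}, x ∈ P → y ∈ P → x + y ∈ P
  sig_neg_one : sig (-1) = 2

namespace L2

variable {K : Type*} [Field K] (C : L2 K)

theorem sig_one : C.sig 1 = 0 := by
  have h := C.sig_mul (one_ne_zero (α := K)) (one_ne_zero (α := K))
  rw [one_mul] at h
  exact (left_eq_add.1 h)

theorem sig_inv {x : K} (hx : x ≠ 0) : C.sig x⁻¹ = - C.sig x := by
  have h := C.sig_mul hx (inv_ne_zero hx)
  rw [mul_inv_cancel₀ hx, C.sig_one] at h
  linear_combination -h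

theorem sig_neg {x : K} (hx : x ≠ 0) : C.sig (-x) = 2 + C.sig x := by
  have h := C.sig_mul (x := -1) (y := x) (by norm_num) hx
  rw [neg_one_mul, C.sig_neg_one] at h
  exact h

/-- strictly positive elements -/
def Pos (x : K) : Prop := C.sig x = 0 ∧ x ≠ 0

theorem Pos.mem {x : K} (h : C.Pos x) : x ∈ C.P := (C.mem_iff h.2).2 h.1

theorem pos_of_mem {x : K} (h : x ∈ C.P) (hx : x ≠ 0) : C.Pos x :=
  ⟨(C.mem_iff hx).1 h, hx⟩

theorem pos_mul {x y : K} (hx : C.Pos x) (hy : C.Pos y) : C.Pos (x * y) :=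
  ⟨by rw [C.sig_mul hx.2 hy.2, hx.1, hy.1, add_zero], mul_ne_zero hx.2 hy.2⟩

theorem pos_inv {x : K} (hx : C.Pos x) : C.Pos x⁻¹ :=
  ⟨by rw [C.sig_inv hx.2, hx.1, neg_zero], inv_ne_zero hx.2⟩

theorem pos_div {x y : K} (hx : C.Pos x) (hy : C.Pos y) : C.Pos (x / y) := by
  rw [div_eq_mul_inv]; exact C.pos_mul hx (C.pos_inv hy)

theorem pos_add {x y : K} (hx : C.Pos x) (hy : C.Pos y) : C.Pos (x + y) := by
  have hne : x + y ≠ 0 := by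
    intro h
    have hyx : y = -x := by linear_combination h
    have h2 : C.sig y = 2 := by rw [hyx, C.sig_neg hx.2, hx.1, add_zero]
    rw [hy.1] at h2
    exact absurd h2 (by decide)
  exact ⟨(C.mem_iff hne).1 (C.add_mem hx.mem hy.mem), hne⟩

theorem pos_add_mem {x y : K} (hx : C.Pos x) (hy : y ∈ C.P) : C.Pos (x + y) := by
  rcases eq_or_ne y 0 with rfl | hy0
  · simpa using hx
  · exact C.pos_add hx (C.pos_of_mem hy hy0)

theorem odd_ne_zero {x : K} (h : Odd4 (C.sig x)) : x ≠ 0 := by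
  intro h0
  rw [h0, C.sig_zero] at h
  rcases h with h | h <;> exact absurd h (by decide)

section CharZ
variable [CharZero K]

theorem pos_nat {n : ℕ} (hn : 0 < n) : C.Pos ((n : K)) := by
  induction n with
  | zero => omega
  | succ k ih =>
    rcases Nat.eq_zero_or_pos k with rfl | hk
    · have h1 : C.Pos 1 := ⟨C.sig_one, one_ne_zero⟩
      simpa using h1
    · have h2 := C.pos_add (ih hk) (⟨C.sig_one, one_ne_zero⟩ : C.Pos 1)
      simpa using h2

theorem pos_int {n : ℤ} (hn : 0 < n) : C.Pos ((n : K)) := by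
  have h : ((n.toNat : ℕ) : K) = (n : K) := by
    rw [← Int.cast_natCast]
    congr 1
    exact Int.toNat_of_nonneg hn.le
  rw [← h]
  exact C.pos_nat (by omega)

theorem pos_rat {q : ℚ} (hq : 0 < q) : C.Pos ((q : K)) := by
  rw [Rat.cast_def]
  exact C.pos_div (C.pos_int (Rat.num_pos.2 hq)) (C.pos_nat q.den_pos)

theorem sig_eq_of_odd_sub_rat {x y : K} {q : ℚ} (hq : 0 < q) (hxy : x = y + (q : K))
    (hx : Odd4 (C.sig x)) (hy : Odd4 (C.sig y)) : C.sig x = C.sig y := by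
  have hkey : ∀ a b : ZMod 4, Odd4 a → Odd4 b → a = b ∨ a + b = 0 := by decide
  rcases hkey _ _ hx hy with heq | hsum
  · exact heq
  · exfalso
    have hx0 := C.odd_ne_zero hx
    have hy0 := C.odd_ne_zero hy
    have p1 : C.Pos (x * y) := ⟨by rw [C.sig_mul hx0 hy0]; exact hsum, mul_ne_zero hx0 hy0⟩
    have p2 : C.Pos (-(y * y)) := by
      refine ⟨?_, by simpa using hy0⟩
      rw [C.sig_neg (mul_ne_zero hy0 hy0), C.sig_mul hy0 hy0]
      revert hy
      generalize C.sig y = c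
      revert c
      decide
    have hiden : x * y + -(y * y) = (q : K) * y := by
      rw [hxy]; ring
    have p3 : C.Pos ((q : K) * y) := hiden ▸ C.pos_add p1 p2
    have : C.sig ((q : K) * y) = C.sig y := by
      rw [C.sig_mul (C.pos_rat hq).2 hy0, (C.pos_rat hq).1, zero_add]
    have h4 : C.sig y = 0 := by rw [← this]; exact p3.1
    rcases hy with h | h <;> rw [h] at h4 <;> exact absurd h4 (by decide)

theorem pos_of_rat_mul {q : ℚ} {w : K} (hq : 0 < q) (h : C.Pos ((q : K) * w)) : C.Pos w := by
  have hw : w ≠ 0 := by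
    intro h0; rw [h0, mul_zero] at h; exact h.2 rfl
  refine ⟨?_, hw⟩
  have := h.1
  rw [C.sig_mul (C.pos_rat hq).2 hw, (C.pos_rat hq).1, zero_add] at this
  exact this

/-- Key halving lemma: if `z` is positive and `z - q` has odd sign for a positive
rational `q`, then `z - q/2` is positive. -/
theorem pos_sub_half {z : K} {q : ℚ} (hq : 0 < q) (hz : C.Pos z)
    (hodd : Odd4 (C.sig (z - (q : K)))) : C.Pos (z - ((q / 2 : ℚ) : K)) := by
  have hw0 : z - (q : K) ≠ 0 := C.odd_ne_zero hodd
  have p1 : C.Pos (z * z) := ⟨by rw [C.sig_mul hz.2 hz.2, hz.1, add_zero], mul_ne_zero hz.2 hz.2⟩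
  have p2 : C.Pos (-((z - (q : K)) * (z - (q : K)))) := by
    refine ⟨?_, by simpa using hw0⟩
    rw [C.sig_neg (mul_ne_zero hw0 hw0), C.sig_mul hw0 hw0]
    revert hodd
    generalize C.sig (z - (q : K)) = c
    revert c
    decide
  have hiden : z * z + -((z - (q : K)) * (z - (q : K)))
      = ((2 * q : ℚ) : K) * (z - ((q / 2 : ℚ) : K)) := by
    push_cast
    ring
  have p3 := hiden ▸ C.pos_add p1 p2
  exact C.pos_of_rat_mul (by positivity) p3

end CharZ
end L2
end BeckerAux
set_option linter.unusedSectionVars false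
namespace BeckerAux
namespace L2

variable {K : Type*} [Field K] (C : L2 K) [CharZero K]

/-- `x` is bounded w.r.t. the order data. -/
def Abd (x : K) : Prop := ∃ q : ℚ, 0 < q ∧ ((q : K) - x) ∈ C.P ∧ ((q : K) + x) ∈ C.P

/-- `x` is infinitesimal w.r.t. the order data. -/
def Inf (x : K) : Prop := ∀ q : ℚ, 0 < q → ((q : K) - x) ∈ C.P ∧ ((q : K) + x) ∈ C.P

theorem posCongr {a b : K} (h : a = b) (hp : C.Pos a) : C.Pos b := h ▸ hp

theorem memCongr {a b : K} (h : a = b) (hp : a ∈ C.P) : b ∈ C.P := h ▸ hp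

theorem inf_abd {x : K} (h : C.Inf x) : C.Abd x :=
  ⟨1, one_pos, (h 1 one_pos).1, (h 1 one_pos).2⟩

theorem abd_neg {x : K} (h : C.Abd x) : C.Abd (-x) := by
  obtain ⟨q, hq, h1, h2⟩ := h
  exact ⟨q, hq, by rwa [sub_neg_eq_add], by rwa [← sub_eq_add_neg]⟩

theorem inf_neg {x : K} (h : C.Inf x) : C.Inf (-x) := by
  intro q hq
  obtain ⟨h1, h2⟩ := h q hq
  exact ⟨by rwa [sub_neg_eq_add], by rwa [← sub_eq_add_neg]⟩

theorem mem_rat_nonneg {c : ℚ} (hc : 0 ≤ c) : ((c : K)) ∈ C.P := by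
  rcases eq_or_lt_of_le hc with rfl | h
  · rw [Rat.cast_zero]; exact C.zero_mem
  · exact (C.pos_rat h).mem

theorem rat_pos_of_pos {e : ℚ} (h : C.Pos ((e : K))) : 0 < e := by
  rcases lt_trichotomy e 0 with he | rfl | he
  · exfalso
    have h1 : ((e : K)) = -(((-e : ℚ) : K)) := by push_cast; ring
    have h2 : C.sig ((e : K)) = 2 := by
      rw [h1, C.sig_neg (C.pos_rat (by linarith)).2, (C.pos_rat (show (0:ℚ) < -e by linarith)).1,
        add_zero]
    rw [h.1] at h2
    exact absurd h2 (by decide)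
  · exact absurd (by norm_num : ((0:ℚ):K) = 0) h.2
  · exact he

theorem abd_rat (c : ℚ) : C.Abd ((c : K)) := by
  refine ⟨|c| + 1, by positivity, ?_, ?_⟩
  · have h1 : (0:ℚ) ≤ |c| + 1 - c := by have := le_abs_self c; linarith
    exact C.memCongr (show (((|c| + 1 - c : ℚ)) : K) = _ by push_cast; ring)
      (C.mem_rat_nonneg h1)
  · have h1 : (0:ℚ) ≤ |c| + 1 + c := by have := neg_abs_le c; linarith
    exact C.memCongr (show (((|c| + 1 + c : ℚ)) : K) = _ by push_cast; ring)
      (C.mem_rat_nonneg h1)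

theorem abd_add {x y : K} (hx : C.Abd x) (hy : C.Abd y) : C.Abd (x + y) := by
  obtain ⟨q, hq, h1, h2⟩ := hx
  obtain ⟨r, hr, h3, h4⟩ := hy
  refine ⟨q + r, by positivity, ?_, ?_⟩
  · exact C.memCongr (show ((q:K) - x) + ((r:K) - y) = _ by push_cast; ring) (C.add_mem h1 h3)
  · exact C.memCongr (show ((q:K) + x) + ((r:K) + y) = _ by push_cast; ring) (C.add_mem h2 h4)

theorem mul_mem' {x y : K} (hx : x ∈ C.P) (hy : y ∈ C.P) : x * y ∈ C.P := by
  rcases eq_or_ne x 0 with rfl | hx0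
  · rw [zero_mul]; exact C.zero_mem
  rcases eq_or_ne y 0 with rfl | hy0
  · rw [mul_zero]; exact C.zero_mem
  exact (C.pos_mul (C.pos_of_mem hx hx0) (C.pos_of_mem hy hy0)).mem

theorem half_mem {x : K} (hx : x ∈ C.P) : (2 : K)⁻¹ * x ∈ C.P := by
  have h2 : C.Pos ((2:K)⁻¹) := by
    have := C.pos_inv (C.posCongr (show (((2:ℚ):K)) = (2:K) by push_cast; ring) (C.pos_rat two_pos))
    exact this
  exact C.mul_mem' h2.mem hx

theorem abd_mul {x y : K} (hx : C.Abd x) (hy : C.Abd y) : C.Abd (x * y) := by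
  obtain ⟨q, hq, h1, h2⟩ := hx
  obtain ⟨r, hr, h3, h4⟩ := hy
  refine ⟨q * r, by positivity, ?_, ?_⟩
  · have hs : (((q:K) - x) * ((r:K) + y)) + (((q:K) + x) * ((r:K) - y)) ∈ C.P :=
      C.add_mem (C.mul_mem' h1 h4) (C.mul_mem' h2 h3)
    have := C.half_mem hs
    exact C.memCongr (show (2:K)⁻¹ * _ = _ by push_cast; field_simp; ring) this
  · have hs : (((q:K) - x) * ((r:K) - y)) + (((q:K) + x) * ((r:K) + y)) ∈ C.P :=
      C.add_mem (C.mul_mem' h1 h3) (C.mul_mem' h2 h4)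
    have := C.half_mem hs
    exact C.memCongr (show (2:K)⁻¹ * _ = _ by push_cast; field_simp; ring) this

theorem inf_add {x y : K} (hx : C.Inf x) (hy : C.Inf y) : C.Inf (x + y) := by
  intro q hq
  obtain ⟨h1, h2⟩ := hx (q/2) (by positivity)
  obtain ⟨h3, h4⟩ := hy (q/2) (by positivity)
  constructor
  · exact C.memCongr (show (((q/2:ℚ):K) - x) + (((q/2:ℚ):K) - y) = _ by push_cast; ring)
      (C.add_mem h1 h3)
  · exact C.memCongr (show (((q/2:ℚ):K) + x) + (((q/2:ℚ):K) + y) = _ by push_cast; ring)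
      (C.add_mem h2 h4)

theorem inf_mul_abd {z x : K} (hz : C.Inf z) (hx : C.Abd x) : C.Inf (x * z) := by
  obtain ⟨q, hq, h1, h2⟩ := hx
  intro r hr
  obtain ⟨h3, h4⟩ := hz (r / q) (by positivity)
  constructor
  · have hs : (((q:K) - x) * (((r/q:ℚ):K) + z)) + (((q:K) + x) * (((r/q:ℚ):K) - z)) ∈ C.P :=
      C.add_mem (C.mul_mem' h1 h4) (C.mul_mem' h2 h3)
    have := C.half_mem hs
    refine C.memCongr (Eq.trans ?_ rfl) this
    have hq0 : (q : K) ≠ 0 := by exact_mod_cast hq.ne'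
    push_cast
    field_simp
    ring
  · have hs : (((q:K) - x) * (((r/q:ℚ):K) - z)) + (((q:K) + x) * (((r/q:ℚ):K) + z)) ∈ C.P :=
      C.add_mem (C.mul_mem' h1 h3) (C.mul_mem' h2 h4)
    have := C.half_mem hs
    refine C.memCongr (Eq.trans ?_ rfl) this
    have hq0 : (q : K) ≠ 0 := by exact_mod_cast hq.ne'
    push_cast
    field_simp
    ring

theorem inf_inv_not_abd {z : K} (hz : C.Inf z) (hz0 : z ≠ 0) : ¬ C.Abd z⁻¹ := by
  rintro ⟨r, hr, h1, h2⟩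
  obtain ⟨h3, h4⟩ := hz (1 / (2*r)) (by positivity)
  have hs : ((((1/(2*r):ℚ)):K) - z) * ((r:K) + z⁻¹)
      + ((((1/(2*r):ℚ)):K) + z) * ((r:K) - z⁻¹) ∈ C.P :=
    C.add_mem (C.mul_mem' h3 h2) (C.mul_mem' h4 h1)
  have heq : ((((1/(2*r):ℚ)):K) - z) * ((r:K) + z⁻¹)
      + ((((1/(2*r):ℚ)):K) + z) * ((r:K) - z⁻¹) = -1 := by
    have hr0 : (r : K) ≠ 0 := by exact_mod_cast hr.ne'
    push_cast
    field_simp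
    ring
  rw [heq] at hs
  have : C.sig (-1) = 0 := (C.mem_iff (by norm_num)).1 hs
  rw [C.sig_neg_one] at this
  exact absurd this (by decide)

theorem odd_not_rat {x : K} (h : Odd4 (C.sig x)) : ∀ q : ℚ, x ≠ (q : K) := by
  intro q hx
  rcases lt_trichotomy q 0 with hq | rfl | hq
  · have h1 : ((q:K)) = -(((-q : ℚ) : K)) := by push_cast; ring
    have h2 : C.sig x = 2 := by
      rw [hx, h1, C.sig_neg (C.pos_rat (show (0:ℚ) < -q by linarith)).2,
        (C.pos_rat (show (0:ℚ) < -q by linarith)).1, add_zero]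
    rw [h2] at h
    exact absurd h (by decide)
  · rw [Rat.cast_zero] at hx
    rw [hx, C.sig_zero] at h
    exact absurd h (by decide)
  · rw [hx, (C.pos_rat hq).1] at h
    exact absurd h (by decide)

end L2
end BeckerAux
set_option linter.unusedSectionVars false
namespace BeckerAux
namespace L2

variable {K : Type*} [Field K] (C : L2 K) [CharZero K]

theorem key3 : ∀ a : ZMod 4, a = 0 ∨ a = 2 ∨ Odd4 a := by decide

theorem oddD_pos {x : K} {d : ℚ} (hodd : Odd4 (C.sig x)) (hd : x - (d:K) ∈ C.P) :
    d < 0 ∧ C.Pos (x - (d:K)) := by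
  have hne : x - (d:K) ≠ 0 := sub_ne_zero.2 (C.odd_not_rat hodd d)
  have hpos : C.Pos (x - (d:K)) := C.pos_of_mem hd hne
  refine ⟨?_, hpos⟩
  by_contra hdn
  push_neg at hdn
  have hx : C.Pos x := C.posCongr (show (x - (d:K)) + ((d:ℚ):K) = x by push_cast; ring)
    (C.pos_add_mem hpos (C.mem_rat_nonneg hdn))
  rw [hx.1] at hodd
  exact absurd hodd (by decide)

theorem oddD_half {x : K} {d : ℚ} (hodd : Odd4 (C.sig x)) (hd : x - (d:K) ∈ C.P) :
    C.Pos (x - ((d/2 : ℚ):K)) := by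
  obtain ⟨hdneg, hpos⟩ := C.oddD_pos hodd hd
  have h1 : Odd4 (C.sig ((x - (d:K)) - (((-d : ℚ)):K))) := by
    have heq : (x - (d:K)) - (((-d : ℚ)):K) = x := by push_cast; ring
    rw [heq]; exact hodd
  have h2 := C.pos_sub_half (q := -d) (by linarith) hpos h1
  exact C.posCongr (show (x - (d:K)) - (((-d/2 : ℚ)):K) = x - ((d/2 : ℚ):K)
    by push_cast; ring) h2

theorem oddU_pos {x : K} {e : ℚ} (hodd : Odd4 (C.sig x)) (he : (e:K) - x ∈ C.P) :
    0 < e ∧ C.Pos ((e:K) - x) := by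
  have hne : (e:K) - x ≠ 0 := fun h => (C.odd_not_rat hodd e) (by linear_combination -h)
  have hpos := C.pos_of_mem he hne
  refine ⟨?_, hpos⟩
  by_contra hen
  push_neg at hen
  have hnx : C.Pos (-x) := C.posCongr (show ((e:K) - x) + (((-e:ℚ)):K) = -x by push_cast; ring)
    (C.pos_add_mem hpos (C.mem_rat_nonneg (by linarith)))
  have h2 : C.sig (-x) = 0 := hnx.1
  rw [C.sig_neg (C.odd_ne_zero hodd)] at h2
  have hkey : ∀ c : ZMod 4, Odd4 c → 2 + c ≠ 0 := by decide
  exact hkey _ hodd h2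

theorem oddU_half {x : K} {e : ℚ} (hodd : Odd4 (C.sig x)) (he : (e:K) - x ∈ C.P) :
    C.Pos (((e/2 : ℚ):K) - x) := by
  obtain ⟨hepos, hpos⟩ := C.oddU_pos hodd he
  have h1 : Odd4 (C.sig (((e:K) - x) - ((e : ℚ):K))) := by
    have heq : ((e:K) - x) - ((e:ℚ):K) = -x := by push_cast; ring
    rw [heq, C.sig_neg (C.odd_ne_zero hodd)]
    revert hodd
    have hkey : ∀ c : ZMod 4, Odd4 c → Odd4 (2 + c) := by decide
    exact hkey _
  have h2 := C.pos_sub_half hepos hpos h1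
  exact C.posCongr (show ((e:K) - x) - (((e/2 : ℚ)):K) = ((e/2 : ℚ):K) - x
    by push_cast; ring) h2

theorem oddU_chain {x : K} {e : ℚ} (hodd : Odd4 (C.sig x)) (he : (e:K) - x ∈ C.P) :
    ∀ n : ℕ, C.Pos (((e / 2^n : ℚ):K) - x) := by
  intro n
  induction n with
  | zero =>
    refine C.posCongr (show (e:K) - x = ((e/2^0 : ℚ):K) - x by norm_num) ?_
    exact (C.oddU_pos hodd he).2
  | succ k ih =>
    have h2 := C.oddU_half hodd ih.mem
    refine C.posCongr (show (((e/2^k/2 : ℚ)):K) - x = ((e/2^(k+1) : ℚ):K) - x by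
      rw [div_div, ← pow_succ]) h2

theorem oddD_chain {x : K} {d : ℚ} (hodd : Odd4 (C.sig x)) (hd : x - (d:K) ∈ C.P) :
    ∀ n : ℕ, C.Pos (x - ((d / 2^n : ℚ):K)) := by
  intro n
  induction n with
  | zero =>
    refine C.posCongr (show x - (d:K) = x - ((d/2^0 : ℚ):K) by norm_num) ?_
    exact (C.oddD_pos hodd hd).2
  | succ k ih =>
    have h2 := C.oddD_half hodd ih.mem
    refine C.posCongr (show x - (((d/2^k/2 : ℚ)):K) = x - ((d/2^(k+1) : ℚ):K) by
      rw [div_div, ← pow_succ]) h2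

theorem odd_inf {x : K} (hodd : Odd4 (C.sig x)) {d e : ℚ}
    (hd : x - (d:K) ∈ C.P) (he : (e:K) - x ∈ C.P) : C.Inf x := by
  intro r hr
  have hdneg := (C.oddD_pos hodd hd).1
  have hepos := (C.oddU_pos hodd he).1
  constructor
  · obtain ⟨n, hn⟩ := pow_unbounded_of_one_lt (e / r) (one_lt_two (α := ℚ))
    have h2n : (0:ℚ) < 2^n := by positivity
    have hlt : e / 2^n < r := by
      rw [div_lt_iff₀ hr] at hn
      rw [div_lt_iff₀ h2n]
      nlinarith
    have hpos := C.oddU_chain hodd he n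
    have h3 : C.Pos (((r - e/2^n : ℚ):K) + (((e/2^n : ℚ):K) - x)) :=
      C.pos_add (C.pos_rat (by linarith)) hpos
    exact (C.posCongr (show _ = (r:K) - x by push_cast; ring) h3).mem
  · obtain ⟨n, hn⟩ := pow_unbounded_of_one_lt ((-d) / r) (one_lt_two (α := ℚ))
    have h2n : (0:ℚ) < 2^n := by positivity
    have hlt : -(d / 2^n) < r := by
      rw [div_lt_iff₀ hr] at hn
      have h3 : -d / 2^n < r := by rw [div_lt_iff₀ h2n]; nlinarith
      have h4 := neg_div ((2:ℚ)^n) d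
      linarith
    have hpos := C.oddD_chain hodd hd n
    have h3 : C.Pos (((r + d/2^n : ℚ):K) + (x - ((d/2^n : ℚ):K))) :=
      C.pos_add (C.pos_rat (by linarith)) hpos
    exact (C.posCongr (show _ = (r:K) + x by push_cast; ring) h3).mem

theorem odd_profile {x : K} (hodd : Odd4 (C.sig x))
    (hD : ∀ d : ℚ, x - (d:K) ∉ C.P) (hU : ∀ e : ℚ, (e:K) - x ∉ C.P) :
    ∀ c : ℚ, C.sig (x - (c:K)) = C.sig x := by
  intro c
  have hne : x - (c:K) ≠ 0 := sub_ne_zero.2 (C.odd_not_rat hodd c)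
  have hoddc : Odd4 (C.sig (x - (c:K))) := by
    rcases key3 (C.sig (x - (c:K))) with h | h | h
    · exact absurd ((C.mem_iff hne).2 h) (hD c)
    · exfalso
      apply hU c
      have heq : (c:K) - x = -(x - (c:K)) := by ring
      refine (C.mem_iff ?_).2 ?_
      · rw [heq]; exact neg_ne_zero.2 hne
      · rw [heq, C.sig_neg hne, h]; decide
    · exact h
  rcases lt_trichotomy c 0 with hc | rfl | hc
  · exact C.sig_eq_of_odd_sub_rat (q := -c) (by linarith)
      (show x - (c:K) = x + ((-c : ℚ):K) by push_cast; ring) hoddc hodd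
  · norm_num
  · exact (C.sig_eq_of_odd_sub_rat (q := c) hc
      (show x = (x - (c:K)) + ((c:ℚ):K) by push_cast; ring) hodd hoddc).symm

theorem odd_unbounded_inf_inv {x : K} (hodd : Odd4 (C.sig x))
    (hD : ∀ d : ℚ, x - (d:K) ∉ C.P) (hU : ∀ e : ℚ, (e:K) - x ∉ C.P) : C.Inf x⁻¹ := by
  have hx0 := C.odd_ne_zero hodd
  have hprof := C.odd_profile hodd hD hU
  intro r hr
  have hr0 : ((r:ℚ):K) ≠ 0 := (C.pos_rat hr).2
  constructor
  · have hne2 : x - ((r⁻¹:ℚ):K) ≠ 0 := sub_ne_zero.2 (C.odd_not_rat hodd _)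
    have heq : (r:K) - x⁻¹ = x⁻¹ * (((r:ℚ):K) * (x - ((r⁻¹ : ℚ):K))) := by
      push_cast
      field_simp
    have hs : C.sig (x⁻¹ * (((r:ℚ):K) * (x - ((r⁻¹ : ℚ):K)))) = 0 := by
      rw [C.sig_mul (inv_ne_zero hx0) (mul_ne_zero hr0 hne2),
        C.sig_mul hr0 hne2, C.sig_inv hx0, hprof r⁻¹, (C.pos_rat hr).1]
      ring
    rw [heq]
    exact (C.mem_iff (mul_ne_zero (inv_ne_zero hx0) (mul_ne_zero hr0 hne2))).2 hs
  · have hne2 : x - (((-r⁻¹):ℚ):K) ≠ 0 := sub_ne_zero.2 (C.odd_not_rat hodd _)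
    have heq : (r:K) + x⁻¹ = x⁻¹ * (((r:ℚ):K) * (x - (((-r⁻¹) : ℚ):K))) := by
      push_cast
      field_simp
      ring
    have hs : C.sig (x⁻¹ * (((r:ℚ):K) * (x - (((-r⁻¹) : ℚ):K)))) = 0 := by
      rw [C.sig_mul (inv_ne_zero hx0) (mul_ne_zero hr0 hne2),
        C.sig_mul hr0 hne2, C.sig_inv hx0, hprof (-r⁻¹), (C.pos_rat hr).1]
      ring
    rw [heq]
    exact (C.mem_iff (mul_ne_zero (inv_ne_zero hx0) (mul_ne_zero hr0 hne2))).2 hs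

theorem odd_one_side_false {x : K} (hodd : Odd4 (C.sig x)) {d : ℚ}
    (hd : x - (d:K) ∈ C.P) (hU : ∀ e : ℚ, (e:K) - x ∉ C.P) : False := by
  have hdneg := (C.oddD_pos hodd hd).1
  have hdcl : ∀ c : ℚ, c < 0 → C.Pos (x - (c:K)) := by
    intro c hc
    obtain ⟨n, hn⟩ := pow_unbounded_of_one_lt ((-d) / (-c)) (one_lt_two (α := ℚ))
    have h2n : (0:ℚ) < 2^n := by positivity
    have hlt : c < d / 2^n := by
      rw [div_lt_iff₀ (by linarith : (0:ℚ) < -c)] at hn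
      rw [lt_div_iff₀ h2n]
      nlinarith
    have hchain := C.oddD_chain hodd hd n
    refine C.posCongr (show (x - ((d/2^n : ℚ):K)) + (((d/2^n - c : ℚ)):K) = x - (c:K)
      by push_cast; ring) ?_
    exact C.pos_add hchain (C.pos_rat (by linarith))
  have hprof : ∀ c : ℚ, 0 < c → C.sig (x - (c:K)) = C.sig x := by
    intro c hc
    have hne : x - (c:K) ≠ 0 := sub_ne_zero.2 (C.odd_not_rat hodd c)
    rcases key3 (C.sig (x - (c:K))) with h | h | h
    · exfalso
      have hposx : C.Pos x := C.posCongr (show (x - (c:K)) + ((c:ℚ):K) = x by push_cast; ring)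
        (C.pos_add ⟨h, hne⟩ (C.pos_rat hc))
      rw [hposx.1] at hodd; exact absurd hodd (by decide)
    · exfalso
      apply hU c
      have heq : (c:K) - x = -(x - (c:K)) := by ring
      refine (C.mem_iff ?_).2 ?_
      · rw [heq]; exact neg_ne_zero.2 hne
      · rw [heq, C.sig_neg hne, h]; decide
    · exact (C.sig_eq_of_odd_sub_rat (q := c) hc
        (show x = (x - (c:K)) + ((c:ℚ):K) by push_cast; ring) hodd h).symm
  have hz : C.Pos (x - (((-1):ℚ):K)) := hdcl (-1) (by norm_num)
  have hzo : Odd4 (C.sig ((x - (((-1):ℚ):K)) - (((2:ℚ)):K))) := by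
    have heq : (x - (((-1):ℚ):K)) - (((2:ℚ)):K) = x - ((1:ℚ):K) := by push_cast; ring
    rw [heq, hprof 1 one_pos]; exact hodd
  have h5 := C.pos_sub_half (q := 2) (by norm_num) hz hzo
  have hxpos : C.Pos x := C.posCongr
    (show (x - (((-1):ℚ):K)) - ((((2:ℚ)/2 : ℚ)):K) = x by push_cast; ring) h5
  rw [hxpos.1] at hodd; exact absurd hodd (by decide)

theorem even_unbounded_profile {x : K} (hsig : C.sig x = 0) (hirr : ∀ q : ℚ, x ≠ (q:K))
    (hU : ∀ e : ℚ, (e:K) - x ∉ C.P) : ∀ c : ℚ, C.sig (x - (c:K)) = 0 := by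
  have hx0 : x ≠ 0 := fun h => hirr 0 (by rw [h]; norm_num)
  have hposx : C.Pos x := ⟨hsig, hx0⟩
  have hD0 : ∀ c : ℚ, c ≤ 0 → C.Pos (x - (c:K)) := fun c hc =>
    C.posCongr (show x + (((-c):ℚ):K) = x - (c:K) by push_cast; ring)
      (C.pos_add_mem hposx (C.mem_rat_nonneg (by linarith)))
  have hdown : ∀ c c' : ℚ, c' < c → C.Pos (x - (c:K)) → C.Pos (x - (c':K)) := fun c c' hlt hp =>
    C.posCongr (show (x - (c:K)) + (((c - c'):ℚ):K) = x - (c':K) by push_cast; ring)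
      (C.pos_add hp (C.pos_rat (by linarith)))
  intro c
  by_contra hc0
  have hne : x - (c:K) ≠ 0 := sub_ne_zero.2 (hirr c)
  have hnotU : ∀ c'' : ℚ, C.sig (x - (c'':K)) ≠ 2 := by
    intro c'' h2
    apply hU c''
    have heq : (c'':K) - x = -(x - (c'':K)) := by ring
    have hne'' : x - (c'':K) ≠ 0 := sub_ne_zero.2 (hirr c'')
    refine (C.mem_iff ?_).2 ?_
    · rw [heq]; exact neg_ne_zero.2 hne''
    · rw [heq, C.sig_neg hne'', h2]; decide
  have hoddc : Odd4 (C.sig (x - (c:K))) := by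
    rcases key3 (C.sig (x - (c:K))) with h | h | h
    · exact absurd h hc0
    · exact absurd h (hnotU c)
    · exact h
  have hcpos : 0 < c := by
    by_contra h
    push_neg at h
    exact hc0 (hD0 c h).1
  have hodd2 : Odd4 (C.sig (x - ((2*c : ℚ):K))) := by
    rcases key3 (C.sig (x - ((2*c : ℚ):K))) with h | h | h
    · exfalso
      have hne2 : x - ((2*c:ℚ):K) ≠ 0 := sub_ne_zero.2 (hirr _)
      exact hc0 (hdown (2*c) c (by linarith) ⟨h, hne2⟩).1
    · exact absurd h (hnotU (2*c))
    · exact h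
  have h5 := C.pos_sub_half (q := 2*c) (by linarith) hposx hodd2
  have hPc : C.Pos (x - (c:K)) :=
    C.posCongr (show x - (((2*c/2 : ℚ)):K) = x - (c:K) by norm_num) h5
  exact hc0 hPc.1

theorem even_unbounded_inf_inv {x : K} (hsig : C.sig x = 0) (hirr : ∀ q : ℚ, x ≠ (q:K))
    (hU : ∀ e : ℚ, (e:K) - x ∉ C.P) : C.Inf x⁻¹ := by
  have hx0 : x ≠ 0 := fun h => hirr 0 (by rw [h]; norm_num)
  have hprof := C.even_unbounded_profile hsig hirr hU
  intro r hr
  have hr0 : ((r:ℚ):K) ≠ 0 := (C.pos_rat hr).2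
  constructor
  · have hne2 : x - ((r⁻¹:ℚ):K) ≠ 0 := sub_ne_zero.2 (hirr _)
    have heq : (r:K) - x⁻¹ = x⁻¹ * (((r:ℚ):K) * (x - ((r⁻¹ : ℚ):K))) := by
      push_cast
      field_simp
    have hs : C.sig (x⁻¹ * (((r:ℚ):K) * (x - ((r⁻¹ : ℚ):K)))) = 0 := by
      rw [C.sig_mul (inv_ne_zero hx0) (mul_ne_zero hr0 hne2),
        C.sig_mul hr0 hne2, C.sig_inv hx0, hprof r⁻¹, (C.pos_rat hr).1, hsig]
      ring
    rw [heq]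
    exact (C.mem_iff (mul_ne_zero (inv_ne_zero hx0) (mul_ne_zero hr0 hne2))).2 hs
  · have hne2 : x - (((-r⁻¹):ℚ):K) ≠ 0 := sub_ne_zero.2 (hirr _)
    have heq : (r:K) + x⁻¹ = x⁻¹ * (((r:ℚ):K) * (x - (((-r⁻¹) : ℚ):K))) := by
      push_cast
      field_simp
      ring
    have hs : C.sig (x⁻¹ * (((r:ℚ):K) * (x - (((-r⁻¹) : ℚ):K)))) = 0 := by
      rw [C.sig_mul (inv_ne_zero hx0) (mul_ne_zero hr0 hne2),
        C.sig_mul hr0 hne2, C.sig_inv hx0, hprof (-r⁻¹), (C.pos_rat hr).1, hsig]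
      ring
    rw [heq]
    exact (C.mem_iff (mul_ne_zero (inv_ne_zero hx0) (mul_ne_zero hr0 hne2))).2 hs

theorem even_bounded_abd {x : K} (hsig : C.sig x = 0) (hirr : ∀ q : ℚ, x ≠ (q:K))
    {e : ℚ} (he : (e:K) - x ∈ C.P) : C.Abd x := by
  have hx0 : x ≠ 0 := fun h => hirr 0 (by rw [h]; norm_num)
  have hposx : C.Pos x := ⟨hsig, hx0⟩
  have hepos : 0 < e := by
    have h1 : C.Pos ((e:K)) := C.posCongr (show x + ((e:K) - x) = ((e:ℚ):K) by push_cast; ring)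
      (C.pos_add_mem hposx he)
    exact C.rat_pos_of_pos h1
  exact ⟨e, hepos, he, (C.pos_add (C.pos_rat hepos) hposx).mem⟩

theorem abd_or_inf_inv (x : K) (hx0 : x ≠ 0) : C.Abd x ∨ C.Inf x⁻¹ := by
  by_cases hrat : ∀ q : ℚ, x ≠ (q:K)
  case neg =>
    push_neg at hrat
    obtain ⟨q, rfl⟩ := hrat
    exact Or.inl (C.abd_rat q)
  case pos =>
  rcases key3 (C.sig x) with hs | hs | hs
  · by_cases hE : ∃ e : ℚ, (e:K) - x ∈ C.P
    · obtain ⟨e, he⟩ := hE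
      exact Or.inl (C.even_bounded_abd hs hrat he)
    · push_neg at hE
      exact Or.inr (C.even_unbounded_inf_inv hs hrat hE)
  · -- apply the previous case to -x
    have hsig' : C.sig (-x) = 0 := by
      rw [C.sig_neg hx0, hs]; decide
    have hrat' : ∀ q : ℚ, -x ≠ (q:K) := by
      intro q h
      exact hrat (-q) (by push_cast; linear_combination -h)
    have hres : C.Abd (-x) ∨ C.Inf (-x)⁻¹ := by
      by_cases hE : ∃ e : ℚ, (e:K) - (-x) ∈ C.P
      · obtain ⟨e, he⟩ := hE
        exact Or.inl (C.even_bounded_abd hsig' hrat' he)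
      · push_neg at hE
        exact Or.inr (C.even_unbounded_inf_inv hsig' hrat' hE)
    rcases hres with h | h
    · left
      have := C.abd_neg h
      rwa [neg_neg] at this
    · right
      have h2 : C.Inf (-(x⁻¹)) := by rwa [← inv_neg]
      have := C.inf_neg h2
      rwa [neg_neg] at this
  · by_cases hD : ∃ d : ℚ, x - (d:K) ∈ C.P
    · by_cases hE : ∃ e : ℚ, (e:K) - x ∈ C.P
      · obtain ⟨d, hd⟩ := hD
        obtain ⟨e, he⟩ := hE
        exact Or.inl (C.inf_abd (C.odd_inf hs hd he))
      · push_neg at hE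
        obtain ⟨d, hd⟩ := hD
        exact absurd (C.odd_one_side_false hs hd hE) (fun h => h)
    · by_cases hE : ∃ e : ℚ, (e:K) - x ∈ C.P
      · push_neg at hD
        obtain ⟨e, he⟩ := hE
        exfalso
        have hodd' : Odd4 (C.sig (-x)) := by
          rw [C.sig_neg hx0]
          revert hs
          have hkey : ∀ c : ZMod 4, Odd4 c → Odd4 (2 + c) := by decide
          exact hkey _
        have hd' : (-x) - (((-e):ℚ):K) ∈ C.P := by
          refine C.memCongr (show (e:K) - x = _ by push_cast; ring) he
        have hU' : ∀ e' : ℚ, (e':K) - (-x) ∉ C.P := by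
          intro e' hmem
          exact hD (-e') (C.memCongr (show (e':K) - (-x) = x - (((-e'):ℚ):K) by push_cast; ring)
            hmem)
        exact C.odd_one_side_false hodd' hd' hU'
      · push_neg at hD
        push_neg at hE
        exact Or.inr (C.odd_unbounded_inf_inv hs hD hE)

theorem odd_abd_inf {x : K} (hodd : Odd4 (C.sig x)) (habd : C.Abd x) : C.Inf x := by
  obtain ⟨q, hq, h1, h2⟩ := habd
  have hd : x - (((-q):ℚ):K) ∈ C.P := C.memCongr (show (q:K) + x = _ by push_cast; ring) h2
  exact C.odd_inf hodd hd h1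

theorem odd_not_unit {x : K} (hodd : Odd4 (C.sig x)) (habd : C.Abd x) : ¬ C.Abd x⁻¹ :=
  C.inf_inv_not_abd (C.odd_abd_inf hodd habd) (C.odd_ne_zero hodd)

end L2
end BeckerAux
set_option linter.unusedSectionVars false
set_option maxHeartbeats 1000000
set_option synthInstance.maxHeartbeats 400000
namespace BeckerAux
namespace L2

variable {K : Type*} [Field K] (C : L2 K) [CharZero K]

theorem abdCongr {a b : K} (h : a = b) (hp : C.Abd a) : C.Abd b := h ▸ hp

theorem abd_zero : C.Abd 0 := C.abdCongr (Rat.cast_zero) (C.abd_rat 0)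

theorem abd_one : C.Abd 1 := C.abdCongr (Rat.cast_one) (C.abd_rat 1)

theorem inf_zero : C.Inf 0 := by
  intro q hq
  constructor
  · exact C.memCongr (by rw [sub_zero]) (C.pos_rat hq).mem
  · exact C.memCongr (by rw [add_zero]) (C.pos_rat hq).mem

/-- The valuation subring of bounded elements. -/
def val : ValuationSubring K where
  carrier := {x | C.Abd x}
  one_mem' := C.abd_one
  mul_mem' := fun ha hb => C.abd_mul ha hb
  zero_mem' := C.abd_zero
  add_mem' := fun ha hb => C.abd_add ha hb
  neg_mem' := fun ha => C.abd_neg ha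
  mem_or_inv_mem' := by
    intro x
    rcases eq_or_ne x 0 with rfl | hx0
    · exact Or.inl C.abd_zero
    · rcases C.abd_or_inf_inv x hx0 with h | h
      · exact Or.inl h
      · exact Or.inr (C.inf_abd h)

theorem mem_val {x : K} : x ∈ C.val ↔ C.Abd x := Iff.rfl

theorem nonunit_inf (y : C.val) (hy : ¬ IsUnit y) : C.Inf ((y : K)) := by
  rcases eq_or_ne ((y : K)) 0 with h0 | h0
  · rw [h0]; exact C.inf_zero
  by_cases hinv : C.Abd ((y : K))⁻¹
  · exfalso
    apply hy
    refine IsUnit.of_mul_eq_one (a := y) ⟨((y : K))⁻¹, hinv⟩ ?_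
    ext
    exact mul_inv_cancel₀ h0
  · rcases C.abd_or_inf_inv ((y:K))⁻¹ (inv_ne_zero h0) with h | h
    · exact absurd h hinv
    · rwa [inv_inv] at h

theorem sq_sum_mem {ι : Type*} (s : Finset ι) (F : ι → K) (hF : ∀ i ∈ s, C.Abd (F i)) :
    ∀ c : ℚ, 0 < c → ((c : K)) + ∑ i ∈ s, (F i) ^ 2 ∈ C.P := by
  classical
  induction s using Finset.induction_on with
  | empty =>
    intro c hc
    simpa using (C.pos_rat hc).mem
  | @insert a s ha ih =>
    intro c hc
    have hterm : ((c/2 : ℚ) : K) + (F a) ^ 2 ∈ C.P := by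
      have habd : C.Abd (F a) := hF a (Finset.mem_insert_self a s)
      rcases eq_or_ne (F a) 0 with hz | hz
      · rw [hz]
        simpa using (C.pos_rat (by positivity : (0:ℚ) < c/2)).mem
      · rcases key3 (C.sig (F a)) with h | h | h
        · have hp : C.Pos ((F a) ^ 2) := by
            refine ⟨?_, pow_ne_zero 2 hz⟩
            rw [pow_two, C.sig_mul hz hz, h]; decide
          exact (C.pos_add (C.pos_rat (by positivity)) hp).mem
        · have hp : C.Pos ((F a) ^ 2) := by
            refine ⟨?_, pow_ne_zero 2 hz⟩
            rw [pow_two, C.sig_mul hz hz, h]; decide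
          exact (C.pos_add (C.pos_rat (by positivity)) hp).mem
        · have hinfa : C.Inf (F a) := C.odd_abd_inf h habd
          have hinf2 : C.Inf (F a * F a) := C.inf_mul_abd hinfa habd
          have := (hinf2 (c/2) (by positivity)).2
          exact C.memCongr (by rw [pow_two]) this
    have hrest := ih (fun i hi => hF i (Finset.mem_insert_of_mem hi)) (c/2) (by positivity)
    rw [Finset.sum_insert ha]
    refine C.memCongr ?_ (C.add_mem hterm hrest)
    push_cast
    ring

theorem residue_real (hreal : (-1 : K) ∉ sums K 2) :
    (-1 : IsLocalRing.ResidueField C.val) ∉ sums (IsLocalRing.ResidueField C.val) 2 := by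
  rintro ⟨m, F, hF⟩
  have hsurj := Ideal.Quotient.mk_surjective (I := IsLocalRing.maximalIdeal C.val)
  choose xs hxs using fun i => hsurj (F i)
  set Y : C.val := 1 + ∑ i, xs i ^ 2 with hY
  have hres : Ideal.Quotient.mk (IsLocalRing.maximalIdeal C.val) Y = 0 := by
    rw [hY, map_add, map_one, map_sum]
    have hterm : ∀ i, Ideal.Quotient.mk (IsLocalRing.maximalIdeal C.val) (xs i ^ 2)
        = F i ^ 2 := fun i => by rw [map_pow, hxs]; rfl
    rw [Finset.sum_congr rfl (fun i _ => hterm i)]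
    show (1 : IsLocalRing.ResidueField C.val) + ∑ i, F i ^ 2 = 0
    rw [← hF]
    ring
  have hmem : Y ∈ IsLocalRing.maximalIdeal C.val := by
    rwa [← Ideal.Quotient.eq_zero_iff_mem]
  have hnon : ¬ IsUnit Y := by
    have := hmem
    rw [IsLocalRing.mem_maximalIdeal, mem_nonunits_iff] at this
    exact this
  have hinf : C.Inf ((Y : K)) := C.nonunit_inf Y hnon
  have hYK : (Y : K) = 1 + ∑ i, ((xs i : K)) ^ 2 := by
    rw [hY]
    push_cast
    rfl
  have h1 := (hinf (1/2) (by norm_num)).1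
  have h2 := C.sq_sum_mem Finset.univ (fun i => ((xs i : K))) (fun i _ => (xs i).2)
    (1/4) (by norm_num)
  have hsum := C.add_mem h1 h2
  have heq : ((((1/2 : ℚ)) : K) - (Y : K)) + ((((1/4 : ℚ)) : K) + ∑ i, ((xs i : K)) ^ 2)
      = -((((1/4 : ℚ)) : K)) := by
    rw [hYK]
    push_cast
    ring
  rw [heq] at hsum
  have hq4 : C.Pos ((((1/4 : ℚ)) : K)) := C.pos_rat (by norm_num)
  have hne : -((((1/4 : ℚ)) : K)) ≠ 0 := neg_ne_zero.2 hq4.2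
  have := (C.mem_iff hne).1 hsum
  rw [C.sig_neg hq4.2, hq4.1, add_zero] at this
  exact absurd this (by decide)

theorem not_two_div (g : K) (hg0 : g ≠ 0) (hgodd : Odd4 (C.sig g)) :
    ∃ gq : Kˣ ⧸ (C.val).unitGroup, ∀ h : Kˣ ⧸ (C.val).unitGroup, h * h ≠ gq := by
  refine ⟨QuotientGroup.mk (Units.mk0 g hg0), ?_⟩
  intro h hh
  obtain ⟨w, rfl⟩ := QuotientGroup.mk_surjective h
  rw [← QuotientGroup.mk_mul, QuotientGroup.eq] at hh
  obtain ⟨h1, h2⟩ := of_mem_unitGroup _ hh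
  have hw0 : (w : K) ≠ 0 := w.ne_zero
  have huval : (((w * w)⁻¹ * Units.mk0 g hg0 : Kˣ) : K) = ((w : K) * (w : K))⁻¹ * g := by
    push_cast
    rfl
  have hsigu : Odd4 (C.sig ((((w * w)⁻¹ * Units.mk0 g hg0 : Kˣ) : K))) := by
    rw [huval, C.sig_mul (inv_ne_zero (mul_ne_zero hw0 hw0)) hg0,
      C.sig_inv (mul_ne_zero hw0 hw0), C.sig_mul hw0 hw0]
    revert hgodd
    have hkey : ∀ a b : ZMod 4, Odd4 a → Odd4 (-(b + b) + a) := by decide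
    exact hkey _ _
  exact C.odd_not_unit hsigu h1 h2

end L2
end BeckerAux
set_option linter.unusedSectionVars false
set_option maxHeartbeats 1000000
set_option synthInstance.maxHeartbeats 400000
namespace BeckerAux

variable {K : Type*} [Field K]

theorem two_to_three_aux (hreal : (-1 : K) ∉ sums K 2)
    (hP : ∃ P : Set K, IsOrderOfExactLevel P 2) :
    ∃ A : ValuationSubring K,
      ((-1 : IsLocalRing.ResidueField A) ∉ sums (IsLocalRing.ResidueField A) 2) ∧
      ∃ gq : Kˣ ⧸ A.unitGroup, ∀ h : Kˣ ⧸ A.unitGroup, h * h ≠ gq := by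
  have : CharZero K := charZero_of_real hreal
  classical
  obtain ⟨P, h0, h1, hm1, hadd, hmul, H, hH, ⟨e⟩⟩ := hP
  set sg : K → ZMod 4 := fun x => if hx : x = 0 then 0 else
    Multiplicative.toAdd (e (QuotientGroup.mk (Units.mk0 x hx))) with hsgdef
  have hsg0 : sg 0 = 0 := dif_pos rfl
  have hsgx : ∀ (x : K) (hx : x ≠ 0),
      sg x = Multiplicative.toAdd (e (QuotientGroup.mk (Units.mk0 x hx))) :=
    fun x hx => dif_neg hx
  have hsgmul : ∀ (x y : K), x ≠ 0 → y ≠ 0 → sg (x * y) = sg x + sg y := by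
    intro x y hx hy
    rw [hsgx _ (mul_ne_zero hx hy), hsgx _ hx, hsgx _ hy]
    have hu : Units.mk0 (x * y) (mul_ne_zero hx hy) = Units.mk0 x hx * Units.mk0 y hy := by
      ext; rfl
    rw [hu, QuotientGroup.mk_mul, map_mul]
    rfl
  have hmem : ∀ (x : K), x ≠ 0 → (x ∈ P ↔ sg x = 0) := by
    intro x hx
    rw [hsgx _ hx]
    constructor
    · intro hxP
      have hH1 : Units.mk0 x hx ∈ H := (hH _).2 hxP
      have h2 : (QuotientGroup.mk (Units.mk0 x hx) : Kˣ ⧸ H) = 1 :=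
        (QuotientGroup.eq_one_iff _).2 hH1
      rw [h2, map_one]
      rfl
    · intro hs
      have h2 : e (QuotientGroup.mk (Units.mk0 x hx)) = 1 := by
        apply Multiplicative.toAdd.injective
        exact hs
      have h3 : (QuotientGroup.mk (Units.mk0 x hx) : Kˣ ⧸ H) = 1 := by
        apply e.injective
        rw [h2, map_one]
      exact (hH _).1 ((QuotientGroup.eq_one_iff _).1 h3)
  have hsone : sg 1 = 0 := (hmem 1 one_ne_zero).1 h1
  have hsneg1 : sg (-1) = 2 := by
    have hne : (-1 : K) ≠ 0 := by norm_num
    have hnz : sg (-1) ≠ 0 := fun h => hm1 ((hmem _ hne).2 h)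
    have hsq : sg (-1) + sg (-1) = 0 := by
      have h5 := hsgmul (-1) (-1) hne hne
      rw [show ((-1 : K) * -1) = 1 by ring, hsone] at h5
      exact h5.symm
    revert hnz hsq
    generalize sg (-1) = c
    revert c
    decide
  set C : L2 K :=
    { P := P
      sig := sg
      sig_zero := hsg0
      sig_mul := fun {x y} hx hy => hsgmul x y hx hy
      mem_iff := fun {x} hx => hmem x hx
      zero_mem := h0
      add_mem := fun {x y} hx hy => hadd x hx y hy
      sig_neg_one := hsneg1 } with hC
  obtain ⟨gu, hgu⟩ := QuotientGroup.mk_surjective (e.symm (Multiplicative.ofAdd (1 : ZMod 4)))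
  have hg0 : ((gu : K)) ≠ 0 := gu.ne_zero
  have hgsig : C.sig ((gu : K)) = 1 := by
    show sg _ = 1
    rw [hsgx _ hg0]
    have hu : Units.mk0 ((gu : K)) hg0 = gu := by ext; rfl
    rw [hu, hgu, e.apply_symm_apply]
    rfl
  exact ⟨C.val, C.residue_real hreal, C.not_two_div _ hg0 (Or.inl hgsig)⟩

end BeckerAux
set_option linter.unusedSectionVars false
set_option maxHeartbeats 1000000
set_option synthInstance.maxHeartbeats 400000
namespace BeckerAux

variable {K : Type*} [Field K]

theorem three_to_one_aux (hreal : (-1 : K) ∉ sums K 2) (a : K) (hb : a ^ 2 ∉ sums K 4) :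
    ∃ P : Set K, IsOrderOfExactLevel P 2 := by
  have hchar : CharZero K := charZero_of_real hreal
  classical
  set b : K := a ^ 2 with hbdef
  set SS : Set (Set K) := {S | sums K 4 ⊆ S ∧ (∀ x ∈ S, ∀ y ∈ S, x + y ∈ S)
    ∧ (∀ x ∈ S, ∀ y ∈ S, x * y ∈ S) ∧ b ∉ S} with hSS
  have hT4 : sums K 4 ∈ SS := by
    refine ⟨subset_rfl, ?_, ?_, hb⟩
    · intro x hx y hy; exact sums_add_mem hx hy
    · intro x hx y hy; exact sums_mul_mem hx hy
  have hchain_cond : ∀ c ⊆ SS, IsChain (· ⊆ ·) c → c.Nonempty →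
      ∃ ub ∈ SS, ∀ s ∈ c, s ⊆ ub := by
    intro c hcS hchain hcne
    refine ⟨⋃₀ c, ⟨?_, ?_, ?_, ?_⟩, fun s hs => Set.subset_sUnion_of_mem hs⟩
    · obtain ⟨s₀, hs₀⟩ := hcne
      exact subset_trans (hcS hs₀).1 (Set.subset_sUnion_of_mem hs₀)
    · intro x hx y hy
      obtain ⟨s₁, hs₁, hxs⟩ := hx
      obtain ⟨s₂, hs₂, hys⟩ := hy
      rcases hchain.total hs₁ hs₂ with h | h
      · exact Set.mem_sUnion_of_mem ((hcS hs₂).2.1 x (h hxs) y hys) hs₂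
      · exact Set.mem_sUnion_of_mem ((hcS hs₁).2.1 x hxs y (h hys)) hs₁
    · intro x hx y hy
      obtain ⟨s₁, hs₁, hxs⟩ := hx
      obtain ⟨s₂, hs₂, hys⟩ := hy
      rcases hchain.total hs₁ hs₂ with h | h
      · exact Set.mem_sUnion_of_mem ((hcS hs₂).2.2.1 x (h hxs) y hys) hs₂
      · exact Set.mem_sUnion_of_mem ((hcS hs₁).2.2.1 x hxs y (h hys)) hs₁
    · rintro ⟨s₁, hs₁, hbs⟩
      exact (hcS hs₁).2.2.2 hbs
  obtain ⟨S, hTS, hSmax⟩ := zorn_subset_nonempty SS hchain_cond _ hT4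
  obtain ⟨hT, hSadd, hSmul, hbS⟩ := hSmax.1
  -- basic members
  have h0S : (0 : K) ∈ S := hT (sums_zero_mem 4)
  have h1S : (1 : K) ∈ S := by
    have := hT (sums_pow_mem 4 1)
    rwa [one_pow] at this
  have hx4 : ∀ x : K, x ^ 4 ∈ S := fun x => hT (sums_pow_mem 4 x)
  have hinv : ∀ s ∈ S, s ≠ 0 → s⁻¹ ∈ S := by
    intro s hs hs0
    have h1 : s * s ∈ S := hSmul s hs s hs
    have h2 : s * s * s ∈ S := hSmul _ h1 s hs
    have h3 : s * s * s * (s⁻¹) ^ 4 ∈ S := hSmul _ h2 _ (hx4 s⁻¹)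
    have he : s * s * s * (s⁻¹) ^ 4 = s⁻¹ := by
      field_simp
    rwa [he] at h3
  have hnatS : ∀ n : ℕ, ((n : K)) ∈ S := by
    intro n
    induction n with
    | zero => simpa using h0S
    | succ k ih =>
      have := hSadd _ ih _ h1S
      simpa using this
  have hqS : ∀ q : ℚ, 0 < q → ((q : K)) ∈ S := by
    intro q hq
    have hden : ((q.den : ℕ) : K) ≠ 0 := by
      exact_mod_cast (Nat.cast_ne_zero (R := K)).2 q.den_nz
    have hnum : ((q.num.toNat : ℕ) : K) ∈ S := hnatS _
    have h1 : ((q.num.toNat : ℕ) : K) * ((q.den : ℕ) : K) ∈ S := hSmul _ hnum _ (hnatS _)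
    have h2 : ((q.num.toNat : ℕ) : K) * ((q.den : ℕ) : K) * ((((q.den : ℕ) : K))⁻¹) ^ 2 ∈ S := by
      have hh : ((((q.den : ℕ) : K))⁻¹) ^ 2 = ((((q.den : ℕ) : K))⁻¹) ^ 4 *
          (((q.den : ℕ) : K) * ((q.den : ℕ) : K)) := by
        field_simp
      rw [hh, ← mul_assoc]
      exact hSmul _ (hSmul _ h1 _ (hx4 _)) _ (hSmul _ (hnatS _) _ (hnatS _))
    have he : ((q.num.toNat : ℕ) : K) * ((q.den : ℕ) : K) * ((((q.den : ℕ) : K))⁻¹) ^ 2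
        = ((q : K)) := by
      have hnn : ((q.num.toNat : ℕ) : K) = ((q.num : ℤ) : K) := by
        have := Int.toNat_of_nonneg (le_of_lt (Rat.num_pos.2 hq))
        exact_mod_cast congrArg (fun z : ℤ => ((z : ℤ) : K)) this
      rw [hnn, Rat.cast_def]
      field_simp
    rwa [he] at h2
  have hm1S : (-1 : K) ∉ S := by
    intro hm1
    have hall : ∀ x : K, x ∈ S := by
      intro x
      have hA : (x + 1) ^ 4 + (-1) * (x - 1) ^ 4 ∈ S :=
        hSadd _ (hx4 _) _ (hSmul _ hm1 _ (hx4 _))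
      have hB : (x + 2) ^ 4 + (-1) * (x - 2) ^ 4 ∈ S :=
        hSadd _ (hx4 _) _ (hSmul _ hm1 _ (hx4 _))
      have hcomb : (((1/48 : ℚ)) : K) *
          (((x + 2) ^ 4 + (-1) * (x - 2) ^ 4) + (-1) * ((2:ℕ) * ((x + 1) ^ 4 + (-1) * (x - 1) ^ 4)))
          ∈ S := by
        refine hSmul _ (hqS _ (by norm_num)) _ (hSadd _ hB _ (hSmul _ hm1 _ (hSmul _ (hnatS 2) _ hA)))
      have he : (((1/48 : ℚ)) : K) *
          (((x + 2) ^ 4 + (-1) * (x - 2) ^ 4) + (-1) * ((2:ℕ) * ((x + 1) ^ 4 + (-1) * (x - 1) ^ 4)))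
          = x := by
        push_cast
        ring
      rwa [he] at hcomb
    exact hbS (hall b)
  have hnegS : ∀ s ∈ S, -s ∈ S → s = 0 := by
    intro s hs hns
    by_contra h0
    apply hm1S
    have := hSmul _ hns _ (hinv s hs h0)
    have he : -s * s⁻¹ = -1 := by field_simp
    rwa [he] at this
  -- maximality step
  have hstep : ∀ x : K, x ∉ S →
      ∃ s₀ ∈ S, ∃ s₁ ∈ S, ∃ s₂ ∈ S, ∃ s₃ ∈ S,
        b = s₀ + x * s₁ + x ^ 2 * s₂ + x ^ 3 * s₃ := by
    intro x hx
    set Sx : Set K := {z | ∃ s₀ ∈ S, ∃ s₁ ∈ S, ∃ s₂ ∈ S, ∃ s₃ ∈ S,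
      z = s₀ + x * s₁ + x ^ 2 * s₂ + x ^ 3 * s₃} with hSxdef
    by_cases hbx : b ∈ Sx
    · exact hbx
    · exfalso
      have hsub : S ⊆ Sx := by
        intro s hs
        exact ⟨s, hs, 0, h0S, 0, h0S, 0, h0S, by ring⟩
      have hSxSS : Sx ∈ SS := by
        refine ⟨fun t ht => hsub (hT ht), ?_, ?_, hbx⟩
        · rintro z ⟨s₀, hs₀, s₁, hs₁, s₂, hs₂, s₃, hs₃, rfl⟩
            w ⟨t₀, ht₀, t₁, ht₁, t₂, ht₂, t₃, ht₃, rfl⟩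
          exact ⟨s₀ + t₀, hSadd _ hs₀ _ ht₀, s₁ + t₁, hSadd _ hs₁ _ ht₁,
            s₂ + t₂, hSadd _ hs₂ _ ht₂, s₃ + t₃, hSadd _ hs₃ _ ht₃, by ring⟩
        · rintro z ⟨s₀, hs₀, s₁, hs₁, s₂, hs₂, s₃, hs₃, rfl⟩
            w ⟨t₀, ht₀, t₁, ht₁, t₂, ht₂, t₃, ht₃, rfl⟩
          refine ⟨s₀ * t₀ + x ^ 4 * (s₁ * t₃ + s₂ * t₂ + s₃ * t₁), ?_,
            s₀ * t₁ + s₁ * t₀ + x ^ 4 * (s₂ * t₃ + s₃ * t₂), ?_,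
            s₀ * t₂ + s₁ * t₁ + s₂ * t₀ + x ^ 4 * (s₃ * t₃), ?_,
            s₀ * t₃ + s₁ * t₂ + s₂ * t₁ + s₃ * t₀, ?_, by ring⟩
          · exact hSadd _ (hSmul _ hs₀ _ ht₀) _ (hSmul _ (hx4 x) _
              (hSadd _ (hSadd _ (hSmul _ hs₁ _ ht₃) _ (hSmul _ hs₂ _ ht₂)) _ (hSmul _ hs₃ _ ht₁)))
          · exact hSadd _ (hSadd _ (hSmul _ hs₀ _ ht₁) _ (hSmul _ hs₁ _ ht₀)) _
              (hSmul _ (hx4 x) _ (hSadd _ (hSmul _ hs₂ _ ht₃) _ (hSmul _ hs₃ _ ht₂)))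
          · exact hSadd _ (hSadd _ (hSadd _ (hSmul _ hs₀ _ ht₂) _ (hSmul _ hs₁ _ ht₁)) _
              (hSmul _ hs₂ _ ht₀)) _ (hSmul _ (hx4 x) _ (hSmul _ hs₃ _ ht₃))
          · exact hSadd _ (hSadd _ (hSadd _ (hSmul _ hs₀ _ ht₃) _ (hSmul _ hs₁ _ ht₂)) _
              (hSmul _ hs₂ _ ht₁)) _ (hSmul _ hs₃ _ ht₀)
      have heq : Sx ⊆ S := hSmax.2 hSxSS hsub
      exact hx (heq ⟨0, h0S, 1, h1S, 0, h0S, 0, h0S, by ring⟩)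
  -- squares
  have hsq : ∀ x : K, x ^ 2 ∈ S ∨ -(x ^ 2) ∈ S := by
    intro x
    by_contra hc
    push_neg at hc
    obtain ⟨hx2, hnx2⟩ := hc
    obtain ⟨s₀, hs₀, s₁, hs₁, s₂, hs₂, s₃, hs₃, hbe⟩ := hstep _ hx2
    obtain ⟨t₀, ht₀, t₁, ht₁, t₂, ht₂, t₃, ht₃, hbe'⟩ := hstep _ hnx2
    set sig1 : K := s₀ + x ^ 4 * s₂ with hsig1
    set sig2 : K := s₁ + x ^ 4 * s₃ with hsig2
    set tau1 : K := t₀ + x ^ 4 * t₂ with htau1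
    set tau2 : K := t₁ + x ^ 4 * t₃ with htau2
    have hsig1S : sig1 ∈ S := hSadd _ hs₀ _ (hSmul _ (hx4 x) _ hs₂)
    have hsig2S : sig2 ∈ S := hSadd _ hs₁ _ (hSmul _ (hx4 x) _ hs₃)
    have htau1S : tau1 ∈ S := hSadd _ ht₀ _ (hSmul _ (hx4 x) _ ht₂)
    have htau2S : tau2 ∈ S := hSadd _ ht₁ _ (hSmul _ (hx4 x) _ ht₃)
    have hb1 : b = sig1 + x ^ 2 * sig2 := by rw [hsig1, hsig2, hbe]; ring
    have hb2 : b = tau1 - x ^ 2 * tau2 := by rw [htau1, htau2, hbe']; ring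
    have hsig2ne : sig2 ≠ 0 := by
      intro h0
      rw [h0, mul_zero, add_zero] at hb1
      exact hbS (hb1 ▸ hsig1S)
    have htau2ne : tau2 ≠ 0 := by
      intro h0
      rw [h0, mul_zero, sub_zero] at hb2
      exact hbS (hb2 ▸ htau1S)
    have hsum_ne : sig2 + tau2 ≠ 0 := by
      intro h0
      have hts : tau2 = -sig2 := by linear_combination h0
      have : sig2 = 0 := hnegS _ hsig2S (by rw [← hts]; exact htau2S)
      exact hsig2ne this
    have hkey : (sig2 + tau2) * b = tau2 * sig1 + sig2 * tau1 := by
      have e1 : tau2 * b = tau2 * sig1 + x ^ 2 * sig2 * tau2 := by rw [hb1]; ring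
      have e2 : sig2 * b = sig2 * tau1 - x ^ 2 * sig2 * tau2 := by rw [hb2]; ring
      linear_combination e1 + e2
    have hbin : b ∈ S := by
      have h5 : (sig2 + tau2)⁻¹ * ((sig2 + tau2) * b) ∈ S :=
        hSmul _ (hinv _ (hSadd _ hsig2S _ htau2S) hsum_ne) _
          (hkey ▸ hSadd _ (hSmul _ htau2S _ hsig1S) _ (hSmul _ hsig2S _ htau1S))
      rwa [← mul_assoc, inv_mul_cancel₀ hsum_ne, one_mul] at h5
    exact hbS hbin
  -- cube classification
  have hy3 : ∀ y : K, y ∉ S → -y ∉ S → -(y ^ 2) ∈ S := by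
    intro y hy hny
    rcases hsq y with h2 | h2
    · exfalso
      obtain ⟨s₀, hs₀, s₁, hs₁, s₂, hs₂, s₃, hs₃, hbe⟩ := hstep _ hy
      obtain ⟨t₀, ht₀, t₁, ht₁, t₂, ht₂, t₃, ht₃, hbe'⟩ := hstep _ hny
      set sig1 : K := s₀ + y ^ 2 * s₂ with hsig1
      set sig2 : K := s₁ + y ^ 2 * s₃ with hsig2
      set tau1 : K := t₀ + y ^ 2 * t₂ with htau1
      set tau2 : K := t₁ + y ^ 2 * t₃ with htau2
      have hsig1S : sig1 ∈ S := hSadd _ hs₀ _ (hSmul _ h2 _ hs₂)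
      have hsig2S : sig2 ∈ S := hSadd _ hs₁ _ (hSmul _ h2 _ hs₃)
      have htau1S : tau1 ∈ S := hSadd _ ht₀ _ (hSmul _ h2 _ ht₂)
      have htau2S : tau2 ∈ S := hSadd _ ht₁ _ (hSmul _ h2 _ ht₃)
      have hb1 : b = sig1 + y * sig2 := by rw [hsig1, hsig2, hbe]; ring
      have hb2 : b = tau1 - y * tau2 := by rw [htau1, htau2, hbe']; ring
      have hsig2ne : sig2 ≠ 0 := by
        intro h0
        rw [h0, mul_zero, add_zero] at hb1
        exact hbS (hb1 ▸ hsig1S)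
      have htau2ne : tau2 ≠ 0 := by
        intro h0
        rw [h0, mul_zero, sub_zero] at hb2
        exact hbS (hb2 ▸ htau1S)
      have hsum_ne : sig2 + tau2 ≠ 0 := by
        intro h0
        have hts : tau2 = -sig2 := by linear_combination h0
        have : sig2 = 0 := hnegS _ hsig2S (by rw [← hts]; exact htau2S)
        exact hsig2ne this
      have hkey : (sig2 + tau2) * b = tau2 * sig1 + sig2 * tau1 := by
        have e1 : tau2 * b = tau2 * sig1 + y * sig2 * tau2 := by rw [hb1]; ring
        have e2 : sig2 * b = sig2 * tau1 - y * sig2 * tau2 := by rw [hb2]; ring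
        linear_combination e1 + e2
      have hbin : b ∈ S := by
        have h5 : (sig2 + tau2)⁻¹ * ((sig2 + tau2) * b) ∈ S :=
          hSmul _ (hinv _ (hSadd _ hsig2S _ htau2S) hsum_ne) _
            (hkey ▸ hSadd _ (hSmul _ htau2S _ hsig1S) _ (hSmul _ hsig2S _ htau1S))
        rwa [← mul_assoc, inv_mul_cancel₀ hsum_ne, one_mul] at h5
      exact hbS hbin
    · exact h2
  -- facts about a
  have ha0 : a ≠ 0 := by
    intro h0
    apply hbS
    rw [hbdef, h0]
    simpa using h0S
  have haS : a ∉ S := by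
    intro h
    apply hbS
    have := hSmul _ h _ h
    rwa [show a * a = b by rw [hbdef]; ring] at this
  have hnaS : -a ∉ S := by
    intro h
    apply hbS
    have := hSmul _ h _ h
    rwa [show -a * -a = b by rw [hbdef]; ring] at this
  have hmb : -(a ^ 2) ∈ S := hy3 a haS hnaS
  have ha2S : a ^ 2 ∉ S := by
    intro h
    exact (pow_ne_zero 2 ha0) (hnegS _ h hmb)
  -- classification of all elements
  have hclass : ∀ y : K, y ≠ 0 →
      y ∈ S ∨ -y ∈ S ∨ a⁻¹ * y ∈ S ∨ -(a⁻¹ * y) ∈ S := by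
    intro y hy0
    by_cases h1' : y ∈ S
    · exact Or.inl h1'
    by_cases h2' : -y ∈ S
    · exact Or.inr (Or.inl h2')
    have hmy2 : -(y ^ 2) ∈ S := hy3 y h1' h2'
    have hz2 : (a⁻¹ * y) ^ 2 ∈ S := by
      have hmem := hSmul _ hmy2 _ (hinv _ hmb (by
        intro h
        exact (pow_ne_zero 2 ha0) (by linear_combination -h)))
      have he : -(y ^ 2) * (-(a ^ 2))⁻¹ = (a⁻¹ * y) ^ 2 := by
        rw [inv_neg, mul_neg, neg_mul, neg_neg, mul_pow, inv_pow]
        ring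
      rwa [he] at hmem
    by_cases h3' : a⁻¹ * y ∈ S
    · exact Or.inr (Or.inr (Or.inl h3'))
    by_cases h4' : -(a⁻¹ * y) ∈ S
    · exact Or.inr (Or.inr (Or.inr h4'))
    · exfalso
      have := hy3 _ h3' h4'
      exact (pow_ne_zero 2 (mul_ne_zero (inv_ne_zero ha0) hy0))
        (hnegS _ hz2 this)
  -- the subgroup H
  set H : Subgroup Kˣ :=
    { carrier := {u : Kˣ | ((u : K)) ∈ S}
      one_mem' := h1S
      mul_mem' := fun {u v} hu hv => hSmul _ hu _ hv
      inv_mem' := fun {u} hu => by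
        have := hinv _ hu u.ne_zero
        simpa using this } with hHdef
  have hHmem : ∀ u : Kˣ, u ∈ H ↔ ((u : K)) ∈ S := fun u => Iff.rfl
  set au : Kˣ := Units.mk0 a ha0 with hau
  set c : Kˣ ⧸ H := QuotientGroup.mk au with hc
  have hmkpow : ∀ (u : Kˣ) (n : ℕ), (QuotientGroup.mk (u ^ n) : Kˣ ⧸ H)
      = (QuotientGroup.mk u : Kˣ ⧸ H) ^ n := fun u n => by
    rw [QuotientGroup.mk_pow]
  have hc4 : c ^ 4 = 1 := by
    rw [hc, ← hmkpow, QuotientGroup.eq_one_iff]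
    show ((au ^ 4 : Kˣ) : K) ∈ S
    have hval : ((au ^ 4 : Kˣ) : K) = -(a ^ 2) * -(a ^ 2) := by
      push_cast [hau, Units.val_mk0]
      ring
    rw [hval]
    exact hSmul _ hmb _ hmb
  have hc1 : c ≠ 1 := by
    rw [hc, Ne, QuotientGroup.eq_one_iff]
    exact haS
  have hc2 : c ^ 2 ≠ 1 := by
    rw [hc, ← hmkpow, Ne, QuotientGroup.eq_one_iff]
    show ¬ ((au ^ 2 : Kˣ) : K) ∈ S
    have hval : ((au ^ 2 : Kˣ) : K) = a ^ 2 := by push_cast [hau, Units.val_mk0]; ring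
    rw [hval]
    exact ha2S
  have hc3 : c ^ 3 ≠ 1 := by
    intro h3
    apply hc1
    rw [← one_mul c]
    nth_rewrite 1 [← h3]
    rw [← pow_succ]
    exact hc4
  have hsurj_pow : ∀ yq : Kˣ ⧸ H, ∃ k : ℕ, yq = c ^ k := by
    intro yq
    induction yq using QuotientGroup.induction_on with
    | H y =>
      rcases hclass ((y : K)) y.ne_zero with h | h | h | h
      · exact ⟨0, by rw [pow_zero]; exact ((QuotientGroup.eq_one_iff y).2 h)⟩
      · refine ⟨2, ?_⟩
        rw [hc, ← hmkpow, QuotientGroup.eq]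
        show (((y⁻¹ * au ^ 2 : Kˣ)) : K) ∈ S
        have hval : (((y⁻¹ * au ^ 2 : Kˣ)) : K) = (-((y:K)))⁻¹ * -(a ^ 2) := by
          push_cast [hau, Units.val_mk0]
          rw [show (-((y:K)))⁻¹ = -(((y:K))⁻¹) by rw [inv_neg]]
          ring
        rw [hval]
        exact hSmul _ (hinv _ h (neg_ne_zero.2 y.ne_zero)) _ hmb
      · refine ⟨1, ?_⟩
        rw [pow_one, hc, QuotientGroup.eq]
        show (((y⁻¹ * au : Kˣ)) : K) ∈ S
        have hne : a⁻¹ * (y : K) ≠ 0 := mul_ne_zero (inv_ne_zero ha0) y.ne_zero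
        have hval : (((y⁻¹ * au : Kˣ)) : K) = (a⁻¹ * (y : K))⁻¹ := by
          push_cast [hau, Units.val_mk0]
          rw [mul_inv, inv_inv]
          ring
        rw [hval]
        exact hinv _ h hne
      · refine ⟨3, ?_⟩
        rw [hc, ← hmkpow, QuotientGroup.eq]
        show (((y⁻¹ * au ^ 3 : Kˣ)) : K) ∈ S
        have hne : -(a⁻¹ * (y : K)) ≠ 0 :=
          neg_ne_zero.2 (mul_ne_zero (inv_ne_zero ha0) y.ne_zero)
        have hval : (((y⁻¹ * au ^ 3 : Kˣ)) : K) = (-(a⁻¹ * (y : K)))⁻¹ * -(a ^ 2) := by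
          push_cast [hau, Units.val_mk0]
          rw [show (-(a⁻¹ * (y:K)))⁻¹ = -((a⁻¹ * (y:K))⁻¹) by rw [inv_neg], mul_inv, inv_inv]
          field_simp
        rw [hval]
        exact hSmul _ (hinv _ h hne) _ hmb
  -- the equivalence with ZMod 4
  have hofMul4 : (zmultiplesHom (Additive (Kˣ ⧸ H)) (Additive.ofMul c)) 4 = 0 := by
    show (4 : ℤ) • Additive.ofMul c = 0
    rw [← ofMul_zpow, show ((4:ℤ)) = ((4:ℕ):ℤ) by norm_num, zpow_natCast, hc4]
    rfl
  set phi0 : ZMod 4 →+ Additive (Kˣ ⧸ H) :=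
    ZMod.lift 4 ⟨zmultiplesHom _ (Additive.ofMul c), hofMul4⟩ with hphi0
  set phi : Multiplicative (ZMod 4) →* (Kˣ ⧸ H) := AddMonoidHom.toMultiplicativeLeft phi0 with hphi
  have hphiapp : ∀ k : ℤ, phi (Multiplicative.ofAdd ((k : ZMod 4))) = c ^ k := by
    intro k
    show Additive.toMul (phi0 ((k : ZMod 4))) = c ^ k
    rw [hphi0, ZMod.lift_coe]
    show Additive.toMul ((k : ℤ) • Additive.ofMul c) = c ^ k
    rw [← ofMul_zpow]
    rfl
  have hsurj : Function.Surjective phi := by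
    intro yq
    obtain ⟨k, hk⟩ := hsurj_pow yq
    refine ⟨Multiplicative.ofAdd ((k : ℕ) : ZMod 4), ?_⟩
    have hcast : (((k : ℕ) : ℤ) : ZMod 4) = ((k : ℕ) : ZMod 4) := by push_cast; ring
    rw [← hcast, hphiapp, hk, zpow_natCast]
  have hinj : Function.Injective phi := by
    refine (injective_iff_map_eq_one phi).2 ?_
    intro x hx
    have hcases : ∀ k : ZMod 4, k = 0 ∨ k = 1 ∨ k = 2 ∨ k = 3 := by decide
    have hrep : x = Multiplicative.ofAdd (Multiplicative.toAdd x) := rfl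
    rcases hcases (Multiplicative.toAdd x) with h | h | h | h
    · rw [hrep, h]; rfl
    · exfalso
      apply hc1
      have h1' := hphiapp 1
      rw [show (((1:ℤ)) : ZMod 4) = (1 : ZMod 4) by norm_num] at h1'
      rw [hrep, h] at hx
      rw [hx] at h1'
      rw [← zpow_one c, h1']
    · exfalso
      apply hc2
      have h1' := hphiapp 2
      rw [show (((2:ℤ)) : ZMod 4) = (2 : ZMod 4) by norm_num] at h1'
      rw [hrep, h] at hx
      rw [hx] at h1'
      rw [show ((2:ℤ)) = ((2:ℕ):ℤ) by norm_num, zpow_natCast] at h1'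
      rw [← h1']
    · exfalso
      apply hc3
      have h1' := hphiapp 3
      rw [show (((3:ℤ)) : ZMod 4) = (3 : ZMod 4) by norm_num] at h1'
      rw [hrep, h] at hx
      rw [hx] at h1'
      rw [show ((3:ℤ)) = ((3:ℕ):ℤ) by norm_num, zpow_natCast] at h1'
      rw [← h1']
  refine ⟨S, h0S, h1S, hm1S, hSadd, hSmul, H, hHmem,
    ⟨(MulEquiv.ofBijective phi ⟨hinj, hsurj⟩).symm⟩⟩

end BeckerAux
/-- Becker: for a formally real field `K`, the following are equivalent:
(1) every square is a sum of fourth powers;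
(2) every real valuation of `K` has 2-divisible value group;
(3) `K` admits no order of exact level 2. -/
theorem stmt12 {K : Type*} [Field K] (hreal : (-1 : K) ∉ sumsOfPowers K 2) :
    List.TFAE
      [∀ a : K, a ^ 2 ∈ sumsOfPowers K 4,
        ∀ A : ValuationSubring K,
          ((-1 : IsLocalRing.ResidueField A) ∉ sumsOfPowers (IsLocalRing.ResidueField A) 2) →
            ∀ g : Kˣ ⧸ A.unitGroup, ∃ h : Kˣ ⧸ A.unitGroup, h * h = g,
        ¬∃ P : Set K, IsOrderOfExactLevel P 2] := by
  have hreal' : (-1 : K) ∉ BeckerAux.sums K 2 := hreal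
  tfae_have 1 → 2 := by
    intro h1 A hA g
    exact BeckerAux.one_to_two h1 A hA g
  tfae_have 2 → 3 := by
    intro h2 hP
    obtain ⟨A, hAres, gq, hgq⟩ := BeckerAux.two_to_three_aux hreal' hP
    obtain ⟨h, hh⟩ := h2 A hAres gq
    exact hgq h hh
  tfae_have 3 → 1 := by
    intro h3 a
    by_contra hb
    exact h3 (BeckerAux.three_to_one_aux hreal' a hb)
  tfae_finish
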